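/- The directed set ω^{ω₁} of all functions from ω₁ (the countable ordinals) to ℕ, with the pointwise order, does not have calibre (ω₁,ω): there exists an uncountable family {f_α : α < ω₁} of such functions no infinite subset of which has an upper bound in ω^{ω₁}. -/
import Mathlib


open Cardinal Set

/-- The set of countable ordinals, `ω₁`. -/
abbrev Omega1 : Type 1 := {o : Ordinal.{0} // o < (Cardinal.aleph 1).ord}

/-- A directed set has calibre `(ω₁,ω)` if every uncountable subset contains an
infinite subset which is bounded (has an upper bound). -/
def CalibreO1O (P : Type*) [Preorder P] : Prop :=
  ∀ S : Set P, ¬ S.Countable → ∃ T ⊆ S, T.Infinite ∧ BddAbove T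

theorem Omega1.Iic_countable (β : Omega1) : (Set.Iic β.1).Countable := by
  have h1 : β.1 + 1 < (Cardinal.aleph 1).ord :=
    (Cardinal.isSuccLimit_ord (Cardinal.aleph0_le_aleph 1)).succ_lt β.2
  have h2 : (Set.Iio (β.1 + 1)).Countable := by
    rw [← Set.countable_coe_iff, ← Cardinal.mk_le_aleph0_iff, Ordinal.mk_Iio_ordinal,
      ← Cardinal.lift_aleph0.{1, 0}, Cardinal.lift_le, ← Order.lt_succ_iff,
      Cardinal.succ_aleph0]
    exact Cardinal.lt_ord.mp h1
  refine Set.Countable.mono (fun x hx => ?_) h2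
  exact lt_of_le_of_lt hx ((Ordinal.add_one_eq_succ β.1) ▸ Order.lt_succ β.1)

theorem Omega1.uncountable : ¬ (Set.univ : Set Omega1).Countable := by
  intro h
  have : Countable Omega1 := Set.countable_univ_iff.mp h
  have h2 : #Omega1 ≤ ℵ₀ := Cardinal.mk_le_aleph0
  rw [show (Omega1 : Type 1) = ↥(Set.Iio (Cardinal.aleph 1).ord) from rfl,
    Ordinal.mk_Iio_ordinal, Cardinal.card_ord, ← Cardinal.lift_aleph0.{1, 0},
    Cardinal.lift_le] at h2
  exact absurd h2 (not_le.mpr Cardinal.aleph0_lt_aleph_one)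

/-- `ω^{ω₁}`, the functions from the countable ordinals to `ℕ` with
the pointwise order, does not have calibre `(ω₁,ω)`: there is an uncountable
family `{f_α : α < ω₁}` no infinite subset of which is bounded. -/
theorem omega_pow_omega1_not_calibre :
    (¬ CalibreO1O (Omega1 → ℕ)) ∧
    ∃ f : Omega1 → (Omega1 → ℕ), Function.Injective f ∧
      ∀ T : Set Omega1, T.Infinite → ¬ BddAbove (f '' T) := by
  -- choose injections from initial segments into ℕ
  choose e he using fun β : Omega1 =>
    Set.countable_iff_exists_injective.mp (Omega1.Iic_countable β)
  set f : Omega1 → Omega1 → ℕ := fun α β =>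
    if h : α.1 ≤ β.1 then e β ⟨α.1, h⟩ else 0 with hf
  have hinj : Function.Injective f := by
    intro α α' h
    rcases le_total α.1 α'.1 with hle | hle
    · have h2 := congrFun h α'
      rw [hf] at h2
      simp only [dif_pos hle, dif_pos (le_refl α'.1)] at h2
      have h3 := he α' h2
      injection h3 with h4
      exact Subtype.ext h4
    · have h2 := congrFun h α
      rw [hf] at h2
      simp only [dif_pos hle, dif_pos (le_refl α.1)] at h2
      have h3 := he α h2
      injection h3 with h4
      exact Subtype.ext h4
  have hmain : ∀ T : Set Omega1, T.Infinite → ¬ BddAbove (f '' T) := by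
    intro T hT hbdd
    obtain ⟨g, hg⟩ := hbdd
    obtain emb := hT.natEmbedding
    set s : ℕ → Ordinal.{0} := fun n => ((emb n).1).1 with hs_def
    have hs : ∀ n, s n < (Cardinal.aleph 1).ord := fun n => ((emb n).1).2
    have hβ : iSup s < (Cardinal.aleph 1).ord :=
      Cardinal.iSup_lt_ord_lift_of_isRegular Cardinal.isRegular_aleph_one
        (by simpa using Cardinal.aleph0_lt_aleph_one) hs
    set β : Omega1 := ⟨iSup s, hβ⟩ with hβ_def
    have hle : ∀ n, s n ≤ β.1 := fun n => Ordinal.le_iSup s n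
    have key : ∀ n, f ((emb n).1) β = e β ⟨s n, hle n⟩ := fun n => by
      rw [hf]; exact dif_pos (hle n)
    have hFle : ∀ n, f ((emb n).1) β ≤ g β := fun n =>
      hg (Set.mem_image_of_mem f (emb n).2) β
    have Finj : Function.Injective
        (fun n => (⟨f ((emb n).1) β, hFle n⟩ : Set.Iic (g β))) := by
      intro m n h
      have h2 : f ((emb m).1) β = f ((emb n).1) β := congrArg Subtype.val h
      rw [key m, key n] at h2
      have h4 := he β h2
      injection h4 with h3
      exact emb.injective (Subtype.ext (Subtype.ext h3))
    haveI : Finite (Set.Iic (g β)) := (Set.finite_Iic (g β)).to_subtype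
    haveI : Finite ℕ := Finite.of_injective _ Finj
    exact not_finite ℕ
  refine ⟨?_, f, hinj, hmain⟩
  intro hcal
  obtain ⟨T, hTsub, hTinf, hTbdd⟩ := hcal (Set.range f) (by
    intro h
    exact Omega1.uncountable (by simpa [Set.preimage_range] using h.preimage hinj))
  have himg : f '' (f ⁻¹' T) = T := Set.image_preimage_eq_of_subset hTsub
  refine hmain (f ⁻¹' T) ?_ (by rwa [himg])
  intro hfin
  exact hTinf (himg ▸ hfin.image f)
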